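/- There exists an open, connected, unbounded set $G$ contained in the left half-plane $\{w\in\mathbb{C} : \mathrm{Re}(w)<0\}$, whose set of real parts $\{\mathrm{Re}(w) : w\in G\}$ is unbounded below, such that for every continuous map $\psi:[0,1)\to G$ with $|\psi(s)|\to\infty$ as $s\to 1^-$, the limit $\lim_{s\to 1^-} e^{\psi(s)}$ does not exist in $\mathbb{C}$; that is, $G$ is a path divergence set for $h(w)=e^w$ at $\infty$ which is not contained in any vertical strip $\{w : p<\mathrm{Re}(w)<0\}$. -/

import Mathlib

open Set Metric Filter

namespace PDS12

/-- base vertical strip -/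
def base : Set ℂ := {w | -1 < w.re} ∩ {w | w.re < 0}

/-- finger `n`: a bounded horizontal slab going left to depth `n+2`, at height `(n, n+1)` -/
def finger (n : ℕ) : Set ℂ :=
  ({w | -((n : ℝ) + 2) < w.re} ∩ {w | w.re < 0}) ∩
    ({w | (n : ℝ) < w.im} ∩ {w | w.im < (n : ℝ) + 1})

def Gset : Set ℂ := base ∪ ⋃ n : ℕ, finger n

lemma isOpen_base : IsOpen base :=
  (isOpen_lt continuous_const Complex.continuous_re).inter
    (isOpen_lt Complex.continuous_re continuous_const)

lemma isOpen_finger (n : ℕ) : IsOpen (finger n) :=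
  (((isOpen_lt continuous_const Complex.continuous_re).inter
    (isOpen_lt Complex.continuous_re continuous_const))).inter
    ((isOpen_lt continuous_const Complex.continuous_im).inter
      (isOpen_lt Complex.continuous_im continuous_const))

lemma isOpen_Gset : IsOpen Gset :=
  isOpen_base.union (isOpen_iUnion isOpen_finger)

lemma convex_base : Convex ℝ base :=
  (convex_halfSpace_re_gt (-1)).inter (convex_halfSpace_re_lt 0)

lemma convex_finger (n : ℕ) : Convex ℝ (finger n) :=
  (((convex_halfSpace_re_gt _).inter (convex_halfSpace_re_lt 0))).inter
    ((convex_halfSpace_im_gt _).inter (convex_halfSpace_im_lt _))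

lemma base_mem (t : ℝ) : (⟨-1/2, t⟩ : ℂ) ∈ base :=
  ⟨show (-1:ℝ) < -1/2 by norm_num, show (-1/2:ℝ) < 0 by norm_num⟩

lemma common_mem (n : ℕ) : (⟨-1/2, (n : ℝ) + 1/2⟩ : ℂ) ∈ base ∩ finger n := by
  have h0 : (0:ℝ) ≤ (n:ℝ) := Nat.cast_nonneg n
  exact ⟨base_mem _, ⟨⟨show -((n:ℝ)+2) < -1/2 by linarith, show (-1/2:ℝ) < 0 by norm_num⟩,
    ⟨show (n:ℝ) < (n:ℝ) + 1/2 by linarith, show (n:ℝ) + 1/2 < (n:ℝ) + 1 by linarith⟩⟩⟩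

lemma isConnected_Gset : IsConnected Gset := by
  refine ⟨⟨⟨-1/2, 0⟩, Or.inl (base_mem 0)⟩, ?_⟩
  have h : Gset = ⋃ n : ℕ, (base ∪ finger n) := by
    simp [Gset, Set.union_iUnion]
  rw [h]
  apply isPreconnected_iUnion
  · exact ⟨⟨-1/2, 0⟩, mem_iInter.2 fun n => Or.inl (base_mem 0)⟩
  · intro n
    exact IsPreconnected.union (⟨-1/2, (n : ℝ) + 1/2⟩ : ℂ) (common_mem n).1 (common_mem n).2
      convex_base.isPreconnected (convex_finger n).isPreconnected

lemma not_bounded_Gset : ¬ Bornology.IsBounded Gset := by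
  intro h
  obtain ⟨C, hC⟩ := isBounded_iff_forall_norm_le.1 h
  have h1 := hC _ (Or.inl (base_mem (|C| + 1)))
  have h2 : |(|C| + 1)| ≤ ‖(⟨-1/2, |C| + 1⟩ : ℂ)‖ := by
    exact Complex.abs_im_le_norm (⟨-1/2, |C| + 1⟩ : ℂ)
  have h3 : (0:ℝ) ≤ |C| := abs_nonneg _
  rw [abs_of_nonneg (by linarith)] at h2
  linarith [le_abs_self C]

lemma Gset_subset : Gset ⊆ {w : ℂ | w.re < 0} := by
  rintro w (hw | hw)
  · exact hw.2
  · obtain ⟨n, hn⟩ := mem_iUnion.1 hw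
    exact hn.1.2

lemma deep_mem (n : ℕ) : (⟨-((n : ℝ) + 1), (n : ℝ) + 1/2⟩ : ℂ) ∈ Gset := by
  have h0 : (0:ℝ) ≤ (n:ℝ) := Nat.cast_nonneg n
  exact Or.inr (mem_iUnion.2 ⟨n,
    ⟨⟨show -((n:ℝ)+2) < -((n:ℝ)+1) by linarith, show -((n:ℝ)+1) < 0 by linarith⟩,
     ⟨show (n:ℝ) < (n:ℝ) + 1/2 by linarith, show (n:ℝ) + 1/2 < (n:ℝ) + 1 by linarith⟩⟩⟩)

lemma not_bddBelow_Gset : ¬ BddBelow (Complex.re '' Gset) := by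
  rintro ⟨c, hc⟩
  obtain ⟨n, hn⟩ := exists_nat_gt (-c)
  have h := hc ⟨_, deep_mem n, rfl⟩
  have h2 : c ≤ -((n : ℝ) + 1) := h
  linarith

lemma hIoo : ∀ᶠ s in nhdsWithin (1:ℝ) (Iio 1), s ∈ Ioo (0:ℝ) 1 :=
  eventually_of_mem (Ioo_mem_nhdsLT_of_mem ⟨zero_lt_one, le_rfl⟩) fun _ h => h

lemma tail {P : ℝ → Prop} (h : ∀ᶠ s in nhdsWithin (1:ℝ) (Iio 1), P s) :
    ∃ a : ℝ, 0 ≤ a ∧ a < 1 ∧ ∀ s, a < s → s < 1 → P s := by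
  obtain ⟨b, hb, hP⟩ := (nhdsLT_basis (1:ℝ)).eventually_iff.1 h
  exact ⟨max b 0, le_max_right _ _, max_lt hb one_pos,
    fun s hs hs1 => hP ⟨(le_max_left b 0).trans_lt hs, hs1⟩⟩

lemma Ioo_sub {a : ℝ} (ha0 : 0 ≤ a) : Ioo a 1 ⊆ Ico 0 1 :=
  fun x hx => ⟨ha0.trans hx.1.le, hx.2⟩

section case1

lemma case1 (ψ : ℝ → ℂ) (hcont : ContinuousOn ψ (Ico 0 1))
    (hmem : ∀ s ∈ Ico (0:ℝ) 1, ψ s ∈ Gset)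
    (hnorm : Tendsto (fun s => ‖ψ s‖) (nhdsWithin 1 (Iio 1)) atTop)
    (hL : Tendsto (fun s => Complex.exp (ψ s)) (nhdsWithin 1 (Iio 1)) (nhds 0)) : False := by
  have hre : Tendsto (fun s => (ψ s).re) (nhdsWithin (1:ℝ) (Iio 1)) atBot := by
    rw [← Real.tendsto_exp_comp_nhds_zero]
    have h1 := hL.norm
    simp only [norm_zero] at h1
    convert h1 using 2 with s
    rw [Complex.norm_exp]
  obtain ⟨a, ha0, ha1, hA⟩ := tail ((hre.eventually (eventually_lt_atBot (-1))).and hIoo)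
  have key : ∀ s, a < s → s < 1 → ∃ n : ℕ, ψ s ∈ finger n := by
    intro s hs hs1
    rcases hmem s ⟨(hA s hs hs1).2.1.le, hs1⟩ with hb | hf
    · have h1 : (-1:ℝ) < (ψ s).re := hb.1
      linarith [(hA s hs hs1).1]
    · exact mem_iUnion.1 hf
  have not_nat : ∀ s, a < s → s < 1 → ∀ m : ℕ, (ψ s).im ≠ m := by
    intro s hs hs1 m hmeq
    obtain ⟨n, hn⟩ := key s hs hs1
    have h1 : (n : ℝ) < m := hmeq ▸ hn.2.1
    have h2 : (m : ℝ) < n + 1 := hmeq ▸ hn.2.2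
    have h1' : n < m := by exact_mod_cast h1
    have h2' : m < n + 1 := by exact_mod_cast h2
    omega
  set s1 := (a+1)/2 with hs1def
  have hs1a : a < s1 := by rw [hs1def]; linarith
  have hs1b : s1 < 1 := by rw [hs1def]; linarith
  obtain ⟨n, hn⟩ := key s1 hs1a hs1b
  have hitNat : ∀ t u : ℝ, t ∈ Ioo a 1 → u ∈ Ioo a 1 → ∀ m : ℕ,
      (ψ t).im < m → (m : ℝ) < (ψ u).im → False := by
    intro t u ht hu m h1 h2
    have hsub : uIcc t u ⊆ Ioo a 1 := (Set.ordConnected_Ioo).uIcc_subset ht hu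
    have hf : ContinuousOn (fun s => (ψ s).im) (uIcc t u) :=
      Complex.continuous_im.comp_continuousOn (hcont.mono (hsub.trans (Ioo_sub ha0)))
    have hval : (m : ℝ) ∈ (fun s => (ψ s).im) '' uIcc t u :=
      intermediate_value_uIcc hf (mem_uIcc.2 (Or.inl ⟨h1.le, h2.le⟩))
    obtain ⟨w, hw, hweq⟩ := hval
    exact not_nat w (hsub hw).1 (hsub hw).2 m hweq
  have clamp : ∀ t, a < t → t < 1 → (n : ℝ) < (ψ t).im ∧ (ψ t).im < n + 1 := by
    intro t ht ht1
    constructor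
    · by_contra h
      push_neg at h
      have hlt : (ψ t).im < n := lt_of_le_of_ne h (not_nat t ht ht1 n)
      exact hitNat t s1 ⟨ht, ht1⟩ ⟨hs1a, hs1b⟩ n hlt hn.2.1
    · by_contra h
      push_neg at h
      have hne : (ψ t).im ≠ ((n+1 : ℕ) : ℝ) := not_nat t ht ht1 (n+1)
      have hlt : ((n : ℝ) + 1) < (ψ t).im := by
        rcases lt_of_le_of_ne h (by push_cast at hne ⊢; exact fun e => hne e.symm) with h'
        exact h'
      have hs1lt : (ψ s1).im < ((n+1 : ℕ) : ℝ) := by push_cast; exact hn.2.2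
      have hlt' : ((n+1 : ℕ) : ℝ) < (ψ t).im := by push_cast; exact hlt
      exact hitNat s1 t ⟨hs1a, hs1b⟩ ⟨ht, ht1⟩ (n+1) hs1lt hlt'
  -- now bound the norm on the tail
  have hbound : ∀ t, a < t → t < 1 → ‖ψ t‖ < 2*(n:ℝ) + 3 := by
    intro t ht ht1
    obtain ⟨m, hm⟩ := key t ht ht1
    obtain ⟨hc1, hc2⟩ := clamp t ht ht1
    -- m = n
    have e1 : (m : ℝ) < n + 1 := lt_trans hm.2.1 hc2
    have e2 : (n : ℝ) < m + 1 := lt_trans hc1 hm.2.2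
    have e1' : m < n + 1 := by exact_mod_cast e1
    have e2' : n < m + 1 := by exact_mod_cast e2
    have hmn : m = n := by omega
    rw [hmn] at hm
    have hre1 : -((n:ℝ)+2) < (ψ t).re := hm.1.1
    have hre2 : (ψ t).re < 0 := hm.1.2
    have h1 : |(ψ t).re| < (n:ℝ) + 2 := abs_lt.2 ⟨by linarith, by linarith⟩
    have h2 : |(ψ t).im| < (n:ℝ) + 1 := abs_lt.2 ⟨by linarith [Nat.cast_nonneg (α := ℝ) n, hc1], by linarith⟩
    calc ‖ψ t‖ ≤ |(ψ t).re| + |(ψ t).im| := by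
          exact Complex.norm_le_abs_re_add_abs_im _
      _ < 2*(n:ℝ) + 3 := by linarith
  have hev := (hnorm.eventually (eventually_gt_atTop (2*(n:ℝ) + 3))).and
    (eventually_of_mem (Ioo_mem_nhdsLT_of_mem (α := ℝ) ⟨ha1, le_rfl⟩) fun _ h => h)
  obtain ⟨s, hsn, hsmem⟩ := hev.exists
  exact absurd hsn (not_lt.2 (hbound s hsmem.1 hsmem.2).le)

end case1

section case2

lemma case2 (ψ : ℝ → ℂ) (hcont : ContinuousOn ψ (Ico 0 1))
    (hnorm : Tendsto (fun s => ‖ψ s‖) (nhdsWithin 1 (Iio 1)) atTop)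
    (L : ℂ) (hL : Tendsto (fun s => Complex.exp (ψ s)) (nhdsWithin 1 (Iio 1)) (nhds L))
    (hL0 : L ≠ 0) : False := by
  have hnL : 0 < ‖L‖ := norm_pos_iff.2 hL0
  have hre : Tendsto (fun s => (ψ s).re) (nhdsWithin (1:ℝ) (Iio 1)) (nhds (Real.log ‖L‖)) := by
    have h1 : Tendsto (fun s => ‖Complex.exp (ψ s)‖) (nhdsWithin (1:ℝ) (Iio 1)) (nhds ‖L‖) :=
      hL.norm
    have h2 := (Real.continuousAt_log (ne_of_gt hnL)).tendsto.comp h1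
    convert h2 using 2 with s
    rw [Function.comp_apply, Complex.norm_exp, Real.log_exp]
  set r := Real.log ‖L‖ with hrdef
  have habs : ∀ᶠ s in nhdsWithin (1:ℝ) (Iio 1), |(ψ s).re| < |r| + 1 := by
    have h1 := Metric.tendsto_nhds.1 hre 1 one_pos
    filter_upwards [h1] with s hs
    rw [Real.dist_eq] at hs
    have := abs_sub_abs_le_abs_sub ((ψ s).re) r
    linarith
  have him : Tendsto (fun s => |(ψ s).im|) (nhdsWithin (1:ℝ) (Iio 1)) atTop := by
    apply tendsto_atTop_mono' _ _ (tendsto_atTop_add_const_right _ (-(|r| + 1)) hnorm)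
    filter_upwards [habs] with s hs
    have h1 : ‖ψ s‖ ≤ |(ψ s).re| + |(ψ s).im| := by
      exact Complex.norm_le_abs_re_add_abs_im _
    linarith
  obtain ⟨a, ha0, ha1, hA⟩ := tail ((him.eventually (eventually_gt_atTop 1)).and hIoo)
  set s1 := (a+1)/2 with hs1def
  have hs1a : a < s1 := by rw [hs1def]; linarith
  have hs1b : s1 < 1 := by rw [hs1def]; linarith
  obtain ⟨ε, hε, hεs1⟩ : ∃ ε : ℝ, (ε = 1 ∨ ε = -1) ∧ 1 < ε * (ψ s1).im := by
    rcases lt_abs.1 (hA s1 hs1a hs1b).1 with h | h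
    · exact ⟨1, Or.inl rfl, by linarith⟩
    · exact ⟨-1, Or.inr rfl, by linarith⟩
  set φ : ℝ → ℝ := fun s => ε * (ψ s).im with hφdef
  have hεabs : ∀ x : ℝ, |ε * x| = |x| := by
    intro x; rcases hε with h | h <;> simp [h]
  have hφcont : ContinuousOn φ (Ico 0 1) :=
    (continuous_const.mul Complex.continuous_im).comp_continuousOn hcont
  have hφpos : ∀ t, a < t → t < 1 → 1 < φ t := by
    intro t ht ht1
    by_contra hcon
    push_neg at hcon
    have habs' : 1 < |φ t| := by
      rw [hφdef]; simp only []; rw [hεabs]; exact (hA t ht ht1).1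
    have h2 : φ t < -1 := by
      rcases lt_abs.1 habs' with h | h
      · linarith
      · linarith
    have hsub := (Set.ordConnected_Ioo).uIcc_subset (⟨ht, ht1⟩ : t ∈ Ioo a 1) ⟨hs1a, hs1b⟩
    have hf : ContinuousOn φ (uIcc t s1) := hφcont.mono (hsub.trans (Ioo_sub ha0))
    have hφs1 : 1 < φ s1 := hεs1
    have h0 : (0:ℝ) ∈ uIcc (φ t) (φ s1) := mem_uIcc.2 (Or.inl ⟨by linarith, by linarith⟩)
    obtain ⟨w, hw, hw0⟩ := intermediate_value_uIcc hf h0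
    have h3 : 1 < |φ w| := by
      rw [hφdef]; simp only []; rw [hεabs]; exact (hA w (hsub hw).1 (hsub hw).2).1
    rw [hw0] at h3
    norm_num at h3
  have hφtop : Tendsto φ (nhdsWithin (1:ℝ) (Iio 1)) atTop := by
    rw [Filter.tendsto_atTop]
    intro b
    have h1 : ∀ᶠ s in nhdsWithin (1:ℝ) (Iio 1), b ≤ |(ψ s).im| :=
      him.eventually (eventually_ge_atTop b)
    have h2 : ∀ᶠ s in nhdsWithin (1:ℝ) (Iio 1), s ∈ Ioo a 1 :=
      eventually_of_mem (Ioo_mem_nhdsLT_of_mem (α := ℝ) ⟨ha1, le_rfl⟩) fun _ h => h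
    filter_upwards [h1, h2] with s hb1 hb2
    have h3 : 1 < φ s := hφpos s hb2.1 hb2.2
    have h4 : |φ s| = |(ψ s).im| := hεabs _
    rcases abs_cases (φ s) with ⟨he, _⟩ | ⟨he, _⟩
    · rw [← h4, he] at hb1; exact hb1
    · linarith
  have hπ := Real.pi_gt_three
  have hexists : ∀ j : ℕ, ∃ u v : ℝ,
      (max a (1 - 1/((j:ℝ)+1)) < u ∧ u < 1) ∧ (max a (1 - 1/((j:ℝ)+1)) < v ∧ v < 1) ∧
      ∃ m : ℕ, φ u = ((m:ℝ)+1) * (2*Real.pi) ∧ φ v = ((m:ℝ)+1) * (2*Real.pi) + Real.pi := by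
    intro j
    set aj := max a (1 - 1/((j:ℝ)+1)) with hajdef
    have hj0 : (0:ℝ) < 1/((j:ℝ)+1) := by positivity
    have haj1 : aj < 1 := max_lt ha1 (by linarith)
    have haj0 : a ≤ aj := le_max_left _ _
    set p := (aj+1)/2 with hpdef
    have hpa : aj < p := by rw [hpdef]; linarith
    have hpb : p < 1 := by rw [hpdef]; linarith
    set m := ⌈φ p⌉₊ with hmdef
    have hm : φ p ≤ (m:ℝ) := Nat.le_ceil _
    have hm0 : (0:ℝ) ≤ (m:ℝ) := Nat.cast_nonneg m
    set c1 := ((m:ℝ)+1) * (2*Real.pi) with hc1def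
    set c2 := c1 + Real.pi with hc2def
    have hc1 : φ p < c1 := by
      have : (m:ℝ) + 1 ≤ ((m:ℝ)+1) * (2*Real.pi) := by nlinarith
      linarith
    have hc2 : φ p < c2 := by rw [hc2def]; linarith
    have hq : ∀ᶠ s in nhdsWithin (1:ℝ) (Iio 1), c2 < φ s :=
      hφtop.eventually (eventually_gt_atTop c2)
    have hqa : ∀ᶠ s in nhdsWithin (1:ℝ) (Iio 1), s ∈ Ioo aj 1 :=
      eventually_of_mem (Ioo_mem_nhdsLT_of_mem (α := ℝ) ⟨haj1, le_rfl⟩) fun _ h => h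
    obtain ⟨q, hq1, hq2⟩ := (hq.and hqa).exists
    have hsub := (Set.ordConnected_Ioo).uIcc_subset (⟨hpa, hpb⟩ : p ∈ Ioo aj 1) hq2
    have hsub2 : uIcc p q ⊆ Ioo a 1 := hsub.trans (fun x hx => ⟨lt_of_le_of_lt haj0 hx.1, hx.2⟩)
    have hf : ContinuousOn φ (uIcc p q) := hφcont.mono (hsub2.trans (Ioo_sub ha0))
    have h1 : c1 ∈ uIcc (φ p) (φ q) := mem_uIcc.2 (Or.inl ⟨hc1.le, by linarith⟩)
    have h2 : c2 ∈ uIcc (φ p) (φ q) := mem_uIcc.2 (Or.inl ⟨hc2.le, hq1.le⟩)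
    obtain ⟨u, hu, huval⟩ := intermediate_value_uIcc hf h1
    obtain ⟨v, hv, hvval⟩ := intermediate_value_uIcc hf h2
    exact ⟨u, v, ⟨(hsub hu).1, (hsub hu).2⟩, ⟨(hsub hv).1, (hsub hv).2⟩, m, huval, hvval⟩
  choose u v hu hv m hm1 hm2 using hexists
  have hone : Tendsto (fun j : ℕ => 1 - 1/((j:ℝ)+1)) atTop (nhds 1) := by
    have := tendsto_one_div_add_atTop_nhds_zero_nat (𝕜 := ℝ)
    have h2 := Tendsto.sub (tendsto_const_nhds : Tendsto (fun _ : ℕ => (1:ℝ)) atTop (nhds 1)) this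
    simpa using h2
  have htendsto : ∀ (w : ℕ → ℝ), (∀ j : ℕ, max a (1 - 1/((j:ℝ)+1)) < w j ∧ w j < 1) →
      Tendsto w atTop (nhdsWithin (1:ℝ) (Iio 1)) := by
    intro w hw
    rw [tendsto_nhdsWithin_iff]
    constructor
    · refine tendsto_of_tendsto_of_tendsto_of_le_of_le hone tendsto_const_nhds
        (fun j => ?_) (fun j => ?_)
      · exact ((le_max_right _ _).trans_lt (hw j).1).le
      · exact (hw j).2.le
    · exact Eventually.of_forall fun j => (hw j).2
  have hLu : Tendsto (fun j => Complex.exp (ψ (u j))) atTop (nhds L) := hL.comp (htendsto u hu)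
  have hLv : Tendsto (fun j => Complex.exp (ψ (v j))) atTop (nhds L) := hL.comp (htendsto v hv)
  have hε2 : ε * ε = 1 := by rcases hε with h | h <;> rw [h] <;> norm_num
  have hsin : ∀ x : ℝ, (∃ k : ℤ, x = (k:ℝ) * Real.pi) → Real.sin (ε * x) = 0 := by
    rintro x ⟨k, rfl⟩
    rcases hε with h | h <;> rw [h]
    · rw [one_mul, Real.sin_int_mul_pi]
    · rw [neg_one_mul, Real.sin_neg, Real.sin_int_mul_pi, neg_zero]
  have hcos : ∀ x : ℝ, Real.cos (ε * x) = Real.cos x := by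
    intro x; rcases hε with h | h <;> rw [h]
    · rw [one_mul]
    · rw [neg_one_mul, Real.cos_neg]
  have himval : ∀ j, (ψ (u j)).im = ε * (((m j:ℝ)+1) * (2*Real.pi)) := by
    intro j
    have h : ε * (ψ (u j)).im = ((m j:ℝ)+1) * (2*Real.pi) := hm1 j
    calc (ψ (u j)).im = (ε * ε) * (ψ (u j)).im := by rw [hε2, one_mul]
      _ = ε * (ε * (ψ (u j)).im) := by ring
      _ = ε * (((m j:ℝ)+1) * (2*Real.pi)) := by rw [h]
  have himval' : ∀ j, (ψ (v j)).im = ε * (((m j:ℝ)+1) * (2*Real.pi) + Real.pi) := by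
    intro j
    have h : ε * (ψ (v j)).im = ((m j:ℝ)+1) * (2*Real.pi) + Real.pi := hm2 j
    calc (ψ (v j)).im = (ε * ε) * (ψ (v j)).im := by rw [hε2, one_mul]
      _ = ε * (ε * (ψ (v j)).im) := by ring
      _ = ε * (((m j:ℝ)+1) * (2*Real.pi) + Real.pi) := by rw [h]
  have himu : ∀ j, (Complex.exp (ψ (u j))).im = 0 := by
    intro j
    rw [Complex.exp_im, himval j, hsin _ ⟨2*((m j:ℤ)+1), by push_cast; ring⟩, mul_zero]
  have himv : ∀ j, (Complex.exp (ψ (v j))).im = 0 := by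
    intro j
    rw [Complex.exp_im, himval' j, hsin _ ⟨2*((m j:ℤ)+1)+1, by push_cast; ring⟩, mul_zero]
  have hreu : ∀ j, 0 ≤ (Complex.exp (ψ (u j))).re := by
    intro j
    rw [Complex.exp_re, himval j, hcos]
    have : ((m j:ℝ)+1) * (2*Real.pi) = (((m j:ℤ)+1 : ℤ) : ℝ) * (2*Real.pi) := by push_cast; ring
    rw [this, Real.cos_int_mul_two_pi, mul_one]
    exact (Real.exp_pos _).le
  have hrev : ∀ j, (Complex.exp (ψ (v j))).re ≤ 0 := by
    intro j
    rw [Complex.exp_re, himval' j, hcos]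
    have : ((m j:ℝ)+1) * (2*Real.pi) + Real.pi
        = (((m j:ℤ)+1 : ℤ) : ℝ) * (2*Real.pi) + Real.pi := by
      push_cast; ring
    rw [this, Real.cos_int_mul_two_pi_add_pi]
    nlinarith [Real.exp_pos ((ψ (v j)).re)]
  have hLim : L.im = 0 := by
    have h1 : Tendsto (fun j => (Complex.exp (ψ (u j))).im) atTop (nhds L.im) :=
      (Complex.continuous_im.tendsto L).comp hLu
    rw [show (fun j => (Complex.exp (ψ (u j))).im) = fun _ => (0:ℝ) from funext himu] at h1
    exact tendsto_nhds_unique h1 tendsto_const_nhds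
  have hLre1 : 0 ≤ L.re :=
    ge_of_tendsto' ((Complex.continuous_re.tendsto L).comp hLu) hreu
  have hLre2 : L.re ≤ 0 :=
    le_of_tendsto' ((Complex.continuous_re.tendsto L).comp hLv) hrev
  exact hL0 (Complex.ext (le_antisymm hLre2 hLre1) hLim)

end case2

end PDS12


/-- There is an open, connected, unbounded set `G` in the left half-plane,
whose set of real parts is unbounded below, which is a path divergence set for `e^w` at
`∞`: along every path to `∞` in `G`, `e^{ψ s}` has no limit. -/
theorem exists_path_divergence_set_not_in_strip :
    ∃ G : Set ℂ,
      IsOpen G ∧ IsConnected G ∧ ¬ Bornology.IsBounded G ∧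
      G ⊆ {w : ℂ | w.re < 0} ∧
      ¬ BddBelow (Complex.re '' G) ∧
      (∀ ψ : ℝ → ℂ, ContinuousOn ψ (Ico 0 1) → (∀ s ∈ Ico (0:ℝ) 1, ψ s ∈ G) →
        Tendsto (fun s => ‖ψ s‖) (nhdsWithin 1 (Iio 1)) atTop →
        ¬ ∃ L : ℂ, Tendsto (fun s => Complex.exp (ψ s)) (nhdsWithin 1 (Iio 1)) (nhds L)) := by
  refine ⟨PDS12.Gset, PDS12.isOpen_Gset, PDS12.isConnected_Gset, PDS12.not_bounded_Gset,
    PDS12.Gset_subset, PDS12.not_bddBelow_Gset, ?_⟩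
  rintro ψ hcont hmem hnorm ⟨L, hL⟩
  by_cases hL0 : L = 0
  · exact PDS12.case1 ψ hcont hmem hnorm (hL0 ▸ hL)
  · exact PDS12.case2 ψ hcont hnorm L hL hL0
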